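/- Dipole approximation of the field of a circular current loop: fix μ₀ > 0 and J ∈ ℝ, let ρ > 0, a ∈ ℝ³, and let the loop be γ(t) := a + ρ(cos t, sin t, 0) for t ∈ [0, 2π], carrying current J, with Biot–Savart field B(x) := (μ₀ J / 4π) ∫₀^{2π} γ'(t) × (x − γ(t)) / |x − γ(t)|³ dt for x off the loop. Set the dipole moment α := π ρ² J e₃, where e₃ = (0,0,1). Then there exists a constant C > 0, independent of ρ, a, J, μ₀ and x, such that for all x ∈ ℝ³ with |x − a| ≥ 2ρ, |B(x) − (μ₀/4π) D(x − a) α| ≤ C μ₀ |J| ρ⁴ / |x − a|⁵. -/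

import Mathlib

open Matrix

/-- Euclidean norm of a vector in `ℝ^d`. -/
noncomputable def enorm' {d : ℕ} (v : Fin d → ℝ) : ℝ := Real.sqrt (∑ i, v i ^ 2)

/-- The dipole matrix `D(v) = 3 v vᵀ / |v|⁵ − I / |v|³`. -/
noncomputable def Dmat {d : ℕ} (v : Fin d → ℝ) : Matrix (Fin d) (Fin d) ℝ :=
  (3 / enorm' v ^ 5) • Matrix.vecMulVec v v
    - (enorm' v ^ 3)⁻¹ • (1 : Matrix (Fin d) (Fin d) ℝ)

set_option maxHeartbeats 1600000

/-! ### Basic facts about `enorm'` -/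

lemma enorm'_nonneg {d : ℕ} (v : Fin d → ℝ) : 0 ≤ enorm' v := Real.sqrt_nonneg _

lemma sq_enorm' {d : ℕ} (v : Fin d → ℝ) : enorm' v ^ 2 = ∑ i, v i ^ 2 :=
  Real.sq_sqrt (by positivity)

lemma enorm'_eq_norm {d : ℕ} (v : Fin d → ℝ) :
    enorm' v = ‖(EuclideanSpace.equiv (Fin d) ℝ).symm v‖ := by
  rw [EuclideanSpace.norm_eq]
  simp [enorm', sq_abs]

lemma enorm'_add_le {d : ℕ} (v w : Fin d → ℝ) :
    enorm' (v + w) ≤ enorm' v + enorm' w := by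
  simp only [enorm'_eq_norm, map_add]
  exact norm_add_le _ _

lemma enorm'_smul {d : ℕ} (c : ℝ) (v : Fin d → ℝ) :
    enorm' (c • v) = |c| * enorm' v := by
  simp only [enorm'_eq_norm, _root_.map_smul, norm_smul, Real.norm_eq_abs]

lemma continuous_enorm' {d : ℕ} : Continuous (enorm' (d := d)) := by
  unfold enorm'
  exact Real.continuous_sqrt.comp (by fun_prop)

lemma fin3_mk2 (h : 2 < 3) : (⟨2, h⟩ : Fin 3) = 2 := rfl

/-! ### Scalar Taylor-type estimates -/

lemma sq_le_imp {m c : ℝ} (h : m^2 ≤ c^2) (hm : 0 ≤ m) (hc : 0 < c) : m ≤ c := by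
  nlinarith [sq_nonneg (m - c)]

lemma sq_ge_imp {m c : ℝ} (h : c^2 ≤ m^2) (hm : 0 ≤ m) (hc : 0 ≤ c) : c ≤ m := by
  nlinarith [sq_nonneg (m - c)]

lemma mclose (m e ω : ℝ) (hm2 : m^2 = (1+e^2)^2 - 4*ω^2) (hmL : 1/4 ≤ m)
    (hω2 : ω^2 ≤ e^2) (he1 : e^2 ≤ 1/4) : |m - 1| ≤ 5*e^2 := by
  rw [abs_le]
  constructor
  · have : (1 - e^2)^2 ≤ m^2 := by nlinarith
    have := sq_ge_imp this (by linarith) (by nlinarith)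
    nlinarith
  · have : m^2 ≤ (1 + 5*e^2)^2 := by nlinarith [sq_nonneg e, sq_nonneg (e^2)]
    have := sq_le_imp this (by linarith) (by positivity)
    linarith

lemma sclose (s m e : ℝ) (hs2 : s^2 = 2 + 2*e^2 + 2*m) (hsL : 1 ≤ s)
    (hmd : |m - 1| ≤ 5*e^2) (he1 : e^2 ≤ 1/4) : |s - 2| ≤ 4*e^2 := by
  obtain ⟨h1, h2⟩ := abs_le.mp hmd
  have key : |s - 2| * 3 ≤ 12 * e^2 := by
    have : |s - 2| * (s + 2) = |s^2 - 4| := by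
      rw [← abs_of_pos (show (0:ℝ) < s + 2 by linarith), ← abs_mul]
      ring_nf
    have h4 : |s^2 - 4| ≤ 12*e^2 := by rw [abs_le]; constructor <;> nlinarith
    nlinarith [abs_nonneg (s - 2)]
  linarith

lemma Nbound (s m e : ℝ) (hsd : |s - 2| ≤ 4*e^2) (hmd : |m - 1| ≤ 5*e^2)
    (hmL : 1/4 ≤ m) (hmU : m ≤ 5/4) (he1 : e^2 ≤ 1/4) :
    |4*(2 + 2*e^2 + m) - 6*s*m^3| ≤ 400*e^2 := by
  obtain ⟨h1, h2⟩ := abs_le.mp hmd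
  obtain ⟨h3, h4⟩ := abs_le.mp hsd
  have hm3d : |m^3 - 1| ≤ 20*e^2 := by
    have : m^3 - 1 = (m - 1)*(m^2 + m + 1) := by ring
    rw [this, abs_mul]
    have : |m^2 + m + 1| ≤ 4 := by rw [abs_le]; constructor <;> nlinarith
    calc |m - 1| * |m^2 + m + 1| ≤ (5*e^2) * 4 :=
          mul_le_mul hmd this (abs_nonneg _) (by positivity)
      _ ≤ 400*e^2/20 := by linarith
      _ = 20*e^2 := by ring
  obtain ⟨h5, h6⟩ := abs_le.mp hm3d
  have hm0 : (0:ℝ) ≤ m := by linarith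
  have hmsq : m^2 ≤ 25/16 := by nlinarith
  have hm3U : m^3 ≤ 2 := by nlinarith [mul_le_mul_of_nonneg_left hmsq hm0]
  have hm30 : (0:ℝ) ≤ m^3 := by positivity
  have key : 4*(2 + 2*e^2 + m) - 6*s*m^3
      = 8*e^2 + 4*(m-1) - 6*((s-2)*m^3 + 2*(m^3-1)) := by ring
  rw [key, abs_le]
  have hp1 : (s-2)*m^3 ≤ 8*e^2 := by nlinarith [mul_le_mul_of_nonneg_right h4 hm30, sq_nonneg e]
  have hp2 : -(8*e^2) ≤ (s-2)*m^3 := by nlinarith [mul_le_mul_of_nonneg_right h3 hm30, sq_nonneg e]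
  constructor <;> nlinarith

lemma N2bound (s m e : ℝ) (hsd : |s - 2| ≤ 4*e^2) (hmd : |m - 1| ≤ 5*e^2)
    (hmL : 1/4 ≤ m) (hmU : m ≤ 5/4) (he1 : e^2 ≤ 1/4) :
    |s*(2 + 2*e^2 - m) - 2*m^3| ≤ 70*e^2 := by
  obtain ⟨h1, h2⟩ := abs_le.mp hmd
  obtain ⟨h3, h4⟩ := abs_le.mp hsd
  have hm3d : |m^3 - 1| ≤ 20*e^2 := by
    have : m^3 - 1 = (m - 1)*(m^2 + m + 1) := by ring
    rw [this, abs_mul]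
    have : |m^2 + m + 1| ≤ 4 := by rw [abs_le]; constructor <;> nlinarith
    calc |m - 1| * |m^2 + m + 1| ≤ (5*e^2) * 4 :=
          mul_le_mul hmd this (abs_nonneg _) (by positivity)
      _ ≤ 400*e^2/20 := by linarith
      _ = 20*e^2 := by ring
  obtain ⟨h5, h6⟩ := abs_le.mp hm3d
  have key : s*(2 + 2*e^2 - m) - 2*m^3
      = (s-2)*(2 + 2*e^2 - m) + 2*(2*e^2 + (1-m) + (1 - m^3)) := by ring
  have hq : 0 ≤ 2 + 2*e^2 - m := by nlinarith
  have hq2 : 2 + 2*e^2 - m ≤ 5/2 := by nlinarith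
  rw [key, abs_le]
  have hp1 : (s-2)*(2 + 2*e^2 - m) ≤ 10*e^2 := by nlinarith
  have hp2 : -(10*e^2) ≤ (s-2)*(2 + 2*e^2 - m) := by nlinarith
  constructor <;> nlinarith

lemma scalar_bounds (e ω aa bb : ℝ) (he : 0 < e) (he2 : e ≤ 1/2) (hω : |ω| ≤ e)
    (ha0 : 0 < aa) (hb0 : 0 < bb)
    (ha : aa^2 = 1 - 2*ω + e^2) (hb : bb^2 = 1 + 2*ω + e^2) :
    |(aa^3)⁻¹ - (bb^3)⁻¹ - 6*ω| ≤ 30000 * e^3 ∧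
    |(aa^3)⁻¹ + (bb^3)⁻¹ - 2| ≤ 5000 * e^2 := by
  obtain ⟨hω1, hω2⟩ := abs_le.mp hω
  have he1 : e^2 ≤ 1/4 := by nlinarith
  have hω2sq : ω^2 ≤ e^2 := by nlinarith
  have haL : 1/2 ≤ aa := by nlinarith [sq_nonneg (aa - (1-e)), sq_nonneg (1-e)]
  have hbL : 1/2 ≤ bb := by nlinarith [sq_nonneg (bb - (1-e)), sq_nonneg (1-e)]
  have haU : aa ≤ 3/2 := by nlinarith [sq_nonneg (aa - 3/2)]
  have hbU : bb ≤ 3/2 := by nlinarith [sq_nonneg (bb - 3/2)]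
  have hm2 : (aa*bb)^2 = (1+e^2)^2 - 4*ω^2 := by
    have : (aa*bb)^2 = aa^2 * bb^2 := by ring
    rw [this, ha, hb]; ring
  have hmL : 1/4 ≤ aa*bb := by nlinarith
  have hmU : aa*bb ≤ 5/4 := by nlinarith [sq_nonneg (aa - bb)]
  have hmd : |aa*bb - 1| ≤ 5*e^2 := mclose _ _ _ hm2 hmL hω2sq he1
  have hs2 : (aa+bb)^2 = 2 + 2*e^2 + 2*(aa*bb) := by nlinarith [ha, hb]
  have hsL : (1:ℝ) ≤ aa + bb := by linarith
  have hsd : |aa + bb - 2| ≤ 4*e^2 := sclose _ _ _ hs2 hsL hmd he1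
  have hdiff : bb^2 - aa^2 = 4*ω := by rw [ha, hb]; ring
  have hsum : aa^2 + bb^2 = 2 + 2*e^2 := by rw [ha, hb]; ring
  have ha3 : (0:ℝ) < aa^3 := by positivity
  have hb3 : (0:ℝ) < bb^3 := by positivity
  have ia : (aa^3)⁻¹ * aa^3 = 1 := inv_mul_cancel₀ (ne_of_gt ha3)
  have ib : (bb^3)⁻¹ * bb^3 = 1 := inv_mul_cancel₀ (ne_of_gt hb3)
  have hcube : (aa+bb)*(bb^3 - aa^3) = 4*ω*(2 + 2*e^2 + aa*bb) := by
    linear_combination (aa^2 + bb^2 + aa*bb) * hdiff + 4*ω*hsum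
  have hcube2 : aa^3 + bb^3 = (aa+bb)*(2 + 2*e^2 - aa*bb) := by
    linear_combination (aa + bb) * hsum
  have hsm3 : 1/64 ≤ (aa+bb) * (aa*bb)^3 := by
    nlinarith [mul_le_mul_of_nonneg_left hsL (show (0:ℝ) ≤ (aa*bb)^3 by positivity)]
  have hm3L : (1:ℝ)/64 ≤ (aa*bb)^3 := by nlinarith
  constructor
  · have hX : ((aa^3)⁻¹ - (bb^3)⁻¹ - 6*ω) * ((aa+bb) * (aa^3 * bb^3))
        = ω * (4*(2 + 2*e^2 + aa*bb) - 6*(aa+bb)*(aa*bb)^3) := by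
      calc ((aa^3)⁻¹ - (bb^3)⁻¹ - 6*ω) * ((aa+bb) * (aa^3 * bb^3))
          = (aa+bb)*bb^3*((aa^3)⁻¹*aa^3) - (aa+bb)*aa^3*((bb^3)⁻¹*bb^3)
            - 6*ω*(aa+bb)*(aa*bb)^3 := by ring
        _ = (aa+bb)*(bb^3 - aa^3) - 6*ω*(aa+bb)*(aa*bb)^3 := by rw [ia, ib]; ring
        _ = ω * (4*(2 + 2*e^2 + aa*bb) - 6*(aa+bb)*(aa*bb)^3) := by rw [hcube]; ring
    have hN := Nbound (aa+bb) (aa*bb) e hsd hmd hmL hmU he1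
    have h1 : |(aa^3)⁻¹ - (bb^3)⁻¹ - 6*ω| * ((aa+bb) * (aa*bb)^3)
        = |ω| * |4*(2 + 2*e^2 + aa*bb) - 6*(aa+bb)*(aa*bb)^3| := by
      have hpos : (0:ℝ) < (aa+bb)*(aa*bb)^3 := by linarith
      rw [← abs_of_pos hpos, ← abs_mul,
        show (aa+bb)*(aa*bb)^3 = (aa+bb)*(aa^3*bb^3) by ring, hX, abs_mul]
    have h3 : |ω| * |4*(2 + 2*e^2 + aa*bb) - 6*(aa+bb)*(aa*bb)^3| ≤ e * (400*e^2) :=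
      mul_le_mul hω hN (abs_nonneg _) (le_of_lt he)
    nlinarith [abs_nonneg ((aa^3)⁻¹ - (bb^3)⁻¹ - 6*ω),
      mul_le_mul_of_nonneg_left hsm3 (abs_nonneg ((aa^3)⁻¹ - (bb^3)⁻¹ - 6*ω))]
  · have hY : ((aa^3)⁻¹ + (bb^3)⁻¹ - 2) * (aa^3 * bb^3)
        = (aa+bb)*(2 + 2*e^2 - aa*bb) - 2*(aa*bb)^3 := by
      calc ((aa^3)⁻¹ + (bb^3)⁻¹ - 2) * (aa^3 * bb^3)
          = bb^3*((aa^3)⁻¹*aa^3) + aa^3*((bb^3)⁻¹*bb^3) - 2*(aa*bb)^3 := by ring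
        _ = aa^3 + bb^3 - 2*(aa*bb)^3 := by rw [ia, ib]; ring
        _ = (aa+bb)*(2 + 2*e^2 - aa*bb) - 2*(aa*bb)^3 := by rw [hcube2]
    have hN2 := N2bound (aa+bb) (aa*bb) e hsd hmd hmL hmU he1
    have hpos2 : (0:ℝ) < aa^3*bb^3 := by positivity
    have h1 : |(aa^3)⁻¹ + (bb^3)⁻¹ - 2| * (aa^3*bb^3)
        = |(aa+bb)*(2 + 2*e^2 - aa*bb) - 2*(aa*bb)^3| := by
      rw [← abs_of_pos hpos2, ← abs_mul, hY]
    have hm3L' : (1:ℝ)/64 ≤ aa^3*bb^3 := by nlinarith [hm3L]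
    nlinarith [abs_nonneg ((aa^3)⁻¹ + (bb^3)⁻¹ - 2),
      mul_le_mul_of_nonneg_left hm3L' (abs_nonneg ((aa^3)⁻¹ + (bb^3)⁻¹ - 2))]

/-! ### The circular loop: auxiliary functions -/

noncomputable def cvec (t : ℝ) : Fin 3 → ℝ := ![Real.cos t, Real.sin t, 0]

noncomputable def Gfun (ρ : ℝ) (R : Fin 3 → ℝ) (t : ℝ) : Fin 3 → ℝ :=
  (enorm' (R - ρ • cvec t) ^ 3)⁻¹ •
    crossProduct (ρ • ![-Real.sin t, Real.cos t, 0]) (R - ρ • cvec t)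

noncomputable def CRfun (R : Fin 3 → ℝ) (t : ℝ) : Fin 3 → ℝ :=
  ![R 2 * Real.cos t, R 2 * Real.sin t, -(R 0 * Real.cos t + R 1 * Real.sin t)]

noncomputable def Pfun (ρ : ℝ) (R : Fin 3 → ℝ) (r t : ℝ) : ℝ :=
  ρ * ((enorm' (R - ρ • cvec t) ^ 3)⁻¹ - (enorm' (R + ρ • cvec t) ^ 3)⁻¹) / 2
    - 3 * ρ^2 * (R 0 * Real.cos t + R 1 * Real.sin t) * (r^5)⁻¹

noncomputable def Qfun (ρ : ℝ) (R : Fin 3 → ℝ) (r t : ℝ) : ℝ :=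
  ρ^2 * (((enorm' (R - ρ • cvec t) ^ 3)⁻¹ + (enorm' (R + ρ • cvec t) ^ 3)⁻¹) / 2 - (r^3)⁻¹)

noncomputable def W1 (R : Fin 3 → ℝ) : Fin 3 → ℝ := ![R 0 * R 2, 0, -(R 0^2)]
noncomputable def W2 (R : Fin 3 → ℝ) : Fin 3 → ℝ := ![R 1 * R 2, R 0 * R 2, -(2*R 0*R 1)]
noncomputable def W3 (R : Fin 3 → ℝ) : Fin 3 → ℝ := ![0, R 1 * R 2, -(R 1^2)]

noncomputable def Msymfun (ρ : ℝ) (R : Fin 3 → ℝ) (r t : ℝ) : Fin 3 → ℝ :=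
  (3*ρ^2*(r^5)⁻¹*Real.cos t^2) • W1 R + (3*ρ^2*(r^5)⁻¹*(Real.sin t*Real.cos t)) • W2 R
    + (3*ρ^2*(r^5)⁻¹*Real.sin t^2) • W3 R + (ρ^2*(r^3)⁻¹) • ![(0:ℝ),0,1]

lemma cvec_add_pi (ρ : ℝ) (R : Fin 3 → ℝ) (t : ℝ) :
    R - ρ • cvec (t + Real.pi) = R + ρ • cvec t := by
  funext i
  fin_cases i <;> simp [cvec, Real.cos_add_pi, Real.sin_add_pi] <;> ring

lemma gvec_add_pi (ρ t : ℝ) :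
    ρ • ![-Real.sin (t + Real.pi), Real.cos (t + Real.pi), (0:ℝ)]
      = -(ρ • ![-Real.sin t, Real.cos t, (0:ℝ)]) := by
  funext i
  fin_cases i <;> simp [Real.cos_add_pi, Real.sin_add_pi]

lemma Gfun_add_pi (ρ : ℝ) (R : Fin 3 → ℝ) (t : ℝ) :
    Gfun ρ R (t + Real.pi)
      = -((enorm' (R + ρ • cvec t) ^ 3)⁻¹ •
          crossProduct (ρ • ![-Real.sin t, Real.cos t, 0]) (R + ρ • cvec t)) := by
  unfold Gfun
  rw [cvec_add_pi, gvec_add_pi]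
  simp only [map_neg, LinearMap.neg_apply, smul_neg]

lemma hpt (ρ : ℝ) (R : Fin 3 → ℝ) (r t : ℝ) :
    (2:ℝ)⁻¹ • (Gfun ρ R t + Gfun ρ R (t + Real.pi)) - Msymfun ρ R r t
      = Pfun ρ R r t • CRfun R t + Qfun ρ R r t • ![(0:ℝ),0,1] := by
  have hsc := Real.sin_sq_add_cos_sq t
  rw [Gfun_add_pi]
  unfold Gfun Msymfun Pfun Qfun CRfun W1 W2 W3 cvec
  funext i
  fin_cases i <;>
    simp only [fin3_mk2, Fin.zero_eta, Fin.mk_one, cross_apply, Pi.add_apply, Pi.sub_apply,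
      Pi.smul_apply, Pi.neg_apply, smul_eq_mul, Matrix.cons_val_zero, Matrix.cons_val_one,
      Matrix.head_cons, Matrix.cons_val_two, Matrix.tail_cons]
  · ring
  · ring
  · linear_combination (ρ^2 * ((enorm' (R - ρ • ![Real.cos t, Real.sin t, 0]) ^ 3)⁻¹
      + (enorm' (R + ρ • ![Real.cos t, Real.sin t, 0]) ^ 3)⁻¹) / 2) * hsc

/-! ### Integral of the main term -/

lemma Msym_integral (ρ : ℝ) (R : Fin 3 → ℝ) (r : ℝ) (hr : enorm' R = r) (hr0 : 0 < r) :
    ∫ t in (0:ℝ)..(2*Real.pi), Msymfun ρ R r t = (Real.pi * ρ^2) • (Dmat R *ᵥ ![0,0,1]) := by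
  have hr2 : r^2 = R 0^2 + R 1^2 + R 2^2 := by
    rw [← hr, sq_enorm', Fin.sum_univ_three]
  have i1 : ∫ t in (0:ℝ)..(2*Real.pi), Real.cos t^2 = Real.pi := by
    rw [integral_cos_sq]
    simp [Real.sin_two_pi, Real.cos_two_pi]
  have i2 : ∫ t in (0:ℝ)..(2*Real.pi), Real.sin t * Real.cos t = 0 := by
    rw [integral_sin_mul_cos₁]
    simp [Real.sin_two_pi]
  have i3 : ∫ t in (0:ℝ)..(2*Real.pi), Real.sin t^2 = Real.pi := by
    rw [integral_sin_sq]
    simp [Real.sin_two_pi, Real.cos_two_pi]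
  unfold Msymfun
  rw [intervalIntegral.integral_add (Continuous.intervalIntegrable (by fun_prop) _ _)
        (Continuous.intervalIntegrable (by fun_prop) _ _),
      intervalIntegral.integral_add (Continuous.intervalIntegrable (by fun_prop) _ _)
        (Continuous.intervalIntegrable (by fun_prop) _ _),
      intervalIntegral.integral_add (Continuous.intervalIntegrable (by fun_prop) _ _)
        (Continuous.intervalIntegrable (by fun_prop) _ _)]
  rw [intervalIntegral.integral_smul_const, intervalIntegral.integral_smul_const,
      intervalIntegral.integral_smul_const, intervalIntegral.integral_const_mul,
      intervalIntegral.integral_const_mul, intervalIntegral.integral_const_mul, i1, i2, i3]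
  rw [intervalIntegral.integral_const]
  funext i
  fin_cases i <;>
    simp only [fin3_mk2, Fin.zero_eta, Fin.mk_one, Dmat, Matrix.mulVec, dotProduct,
      Fin.sum_univ_three, Matrix.sub_apply, Matrix.smul_apply, Matrix.vecMulVec_apply,
      Matrix.one_apply, Pi.add_apply, Pi.smul_apply, smul_eq_mul, W1, W2, W3,
      Matrix.cons_val_zero, Matrix.cons_val_one, Matrix.head_cons, Matrix.cons_val_two,
      Matrix.tail_cons, hr, if_true, if_false, sub_zero, mul_zero, zero_mul, mul_one,
      eq_self_iff_true]
  · simp; ring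
  · simp; ring
  · norm_num
    have hrr : r^2 * (r^5)⁻¹ = (r^3)⁻¹ := by
      rw [show r^5 = r^3*r^2 by ring, mul_inv]
      field_simp
    linear_combination (3*Real.pi*ρ^2*(r^5)⁻¹) * hr2 - (3*Real.pi*ρ^2) * hrr

/-! ### Pointwise bounds -/

lemma A_sq (ρ : ℝ) (R : Fin 3 → ℝ) (r : ℝ) (hr : enorm' R = r) (t : ℝ) :
    enorm' (R - ρ • cvec t) ^ 2
      = r^2 - 2*ρ*(R 0 * Real.cos t + R 1 * Real.sin t) + ρ^2 := by
  have hr2 : r^2 = R 0^2 + R 1^2 + R 2^2 := by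
    rw [← hr, sq_enorm', Fin.sum_univ_three]
  rw [sq_enorm', Fin.sum_univ_three]
  simp only [cvec, Pi.sub_apply, Pi.smul_apply, smul_eq_mul, Matrix.cons_val_zero,
    Matrix.cons_val_one, Matrix.head_cons, Matrix.cons_val_two, Matrix.tail_cons]
  linear_combination (-1 : ℝ) * hr2 + ρ^2 * Real.sin_sq_add_cos_sq t

lemma B_sq (ρ : ℝ) (R : Fin 3 → ℝ) (r : ℝ) (hr : enorm' R = r) (t : ℝ) :
    enorm' (R + ρ • cvec t) ^ 2
      = r^2 + 2*ρ*(R 0 * Real.cos t + R 1 * Real.sin t) + ρ^2 := by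
  have hr2 : r^2 = R 0^2 + R 1^2 + R 2^2 := by
    rw [← hr, sq_enorm', Fin.sum_univ_three]
  rw [sq_enorm', Fin.sum_univ_three]
  simp only [cvec, Pi.add_apply, Pi.smul_apply, smul_eq_mul, Matrix.cons_val_zero,
    Matrix.cons_val_one, Matrix.head_cons, Matrix.cons_val_two, Matrix.tail_cons]
  linear_combination (-1 : ℝ) * hr2 + ρ^2 * Real.sin_sq_add_cos_sq t

lemma w_le (R : Fin 3 → ℝ) (r : ℝ) (hr : enorm' R = r) (hr0 : 0 < r) (t : ℝ) :
    |R 0 * Real.cos t + R 1 * Real.sin t| ≤ r := by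
  have hr2 : r^2 = R 0^2 + R 1^2 + R 2^2 := by
    rw [← hr, sq_enorm', Fin.sum_univ_three]
  have h := Real.sin_sq_add_cos_sq t
  rw [abs_le]
  constructor <;> nlinarith [sq_nonneg (R 0 * Real.sin t - R 1 * Real.cos t), sq_nonneg (R 2),
    sq_nonneg (R 0 * Real.cos t + R 1 * Real.sin t + r), sq_nonneg (R 0 * Real.cos t + R 1 * Real.sin t - r)]

lemma A_pos (ρ : ℝ) (R : Fin 3 → ℝ) (r : ℝ) (hρ : 0 < ρ) (hr : enorm' R = r)
    (h2ρ : 2*ρ ≤ r) (t : ℝ) : 0 < enorm' (R - ρ • cvec t) := by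
  have hr0 : 0 < r := by linarith
  have h1 := A_sq ρ R r hr t
  have h2 := w_le R r hr hr0 t
  obtain ⟨h3, h4⟩ := abs_le.mp h2
  have h5 : (r - ρ)^2 ≤ enorm' (R - ρ • cvec t) ^ 2 := by nlinarith
  have h6 : 0 ≤ enorm' (R - ρ • cvec t) := enorm'_nonneg _
  nlinarith

lemma B_pos (ρ : ℝ) (R : Fin 3 → ℝ) (r : ℝ) (hρ : 0 < ρ) (hr : enorm' R = r)
    (h2ρ : 2*ρ ≤ r) (t : ℝ) : 0 < enorm' (R + ρ • cvec t) := by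
  have := A_pos ρ R r hρ hr h2ρ (t + Real.pi)
  rwa [cvec_add_pi] at this

lemma PQ_bounds (ρ : ℝ) (R : Fin 3 → ℝ) (r : ℝ) (hρ : 0 < ρ) (hr : enorm' R = r)
    (h2ρ : 2*ρ ≤ r) (t : ℝ) :
    |Pfun ρ R r t| ≤ 15000 * ρ^4 / r^6 ∧ |Qfun ρ R r t| ≤ 2500 * ρ^4 / r^5 := by
  have hr0 : 0 < r := by linarith
  have hA0 := A_pos ρ R r hρ hr h2ρ t
  have hB0 := B_pos ρ R r hρ hr h2ρ t
  have hA2 := A_sq ρ R r hr t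
  have hB2 := B_sq ρ R r hr t
  have hw := w_le R r hr hr0 t
  set w := R 0 * Real.cos t + R 1 * Real.sin t with hwdef
  set A := enorm' (R - ρ • cvec t) with hAdef
  set Bv := enorm' (R + ρ • cvec t) with hBdef
  have he : 0 < ρ/r := by positivity
  have he2 : ρ/r ≤ 1/2 := by rw [div_le_iff₀ hr0]; linarith
  have hω : |ρ*w/r^2| ≤ ρ/r := by
    rw [abs_div, abs_mul, abs_of_pos hρ, abs_of_pos (show (0:ℝ) < r^2 by positivity),
      div_le_div_iff₀ (by positivity) hr0]
    nlinarith [mul_le_mul_of_nonneg_left hw (le_of_lt hρ)]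
  have ha0 : 0 < A/r := by positivity
  have hb0 : 0 < Bv/r := by positivity
  have ha : (A/r)^2 = 1 - 2*(ρ*w/r^2) + (ρ/r)^2 := by
    rw [div_pow, hA2]
    field_simp
  have hb : (Bv/r)^2 = 1 + 2*(ρ*w/r^2) + (ρ/r)^2 := by
    rw [div_pow, hB2]
    field_simp
  obtain ⟨hodd, heven⟩ := scalar_bounds (ρ/r) (ρ*w/r^2) (A/r) (Bv/r) he he2 hω ha0 hb0 ha hb
  have hAr : A = (A/r) * r := by field_simp
  have hBr : Bv = (Bv/r) * r := by field_simp
  constructor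
  · have hP : Pfun ρ R r t
        = ρ * (((A/r)^3)⁻¹ - ((Bv/r)^3)⁻¹ - 6*(ρ*w/r^2)) * (r^3)⁻¹ / 2 := by
      unfold Pfun
      rw [← hAdef, ← hBdef, ← hwdef, hAr, hBr]
      have h1 : ((A/r*r)^3) = (A/r)^3 * r^3 := by ring
      have h2 : ((Bv/r*r)^3) = (Bv/r)^3 * r^3 := by ring
      rw [h1, h2, mul_inv, mul_inv]
      field_simp
      ring
    rw [hP]
    rw [abs_div, abs_mul, abs_mul, abs_of_pos hρ,
      abs_of_pos (show (0:ℝ) < (r^3)⁻¹ by positivity), abs_of_pos (show (0:ℝ) < (2:ℝ) by norm_num)]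
    calc ρ * |((A/r)^3)⁻¹ - ((Bv/r)^3)⁻¹ - 6*(ρ*w/r^2)| * (r^3)⁻¹ / 2
        ≤ ρ * (30000*(ρ/r)^3) * (r^3)⁻¹ / 2 := by gcongr
      _ = 15000 * ρ^4 / r^6 := by field_simp; ring
  · have hQ : Qfun ρ R r t
        = ρ^2 * (((A/r)^3)⁻¹ + ((Bv/r)^3)⁻¹ - 2) * (r^3)⁻¹ / 2 := by
      unfold Qfun
      rw [← hAdef, ← hBdef, hAr, hBr]
      have h1 : ((A/r*r)^3) = (A/r)^3 * r^3 := by ring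
      have h2 : ((Bv/r*r)^3) = (Bv/r)^3 * r^3 := by ring
      rw [h1, h2, mul_inv, mul_inv]
      field_simp
    rw [hQ]
    rw [abs_div, abs_mul, abs_mul, abs_of_pos (show (0:ℝ) < ρ^2 by positivity),
      abs_of_pos (show (0:ℝ) < (r^3)⁻¹ by positivity), abs_of_pos (show (0:ℝ) < (2:ℝ) by norm_num)]
    calc ρ^2 * |((A/r)^3)⁻¹ + ((Bv/r)^3)⁻¹ - 2| * (r^3)⁻¹ / 2
        ≤ ρ^2 * (5000*(ρ/r)^2) * (r^3)⁻¹ / 2 := by gcongr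
      _ = 2500 * ρ^4 / r^5 := by field_simp; ring

lemma CR_norm (R : Fin 3 → ℝ) (r : ℝ) (hr : enorm' R = r) (hr0 : 0 < r) (t : ℝ) :
    enorm' (CRfun R t) ≤ r := by
  have hr2 : r^2 = R 0^2 + R 1^2 + R 2^2 := by
    rw [← hr, sq_enorm', Fin.sum_univ_three]
  have hsum : ∑ i, (CRfun R t) i ^ 2 ≤ r^2 := by
    rw [Fin.sum_univ_three]
    simp only [CRfun, Matrix.cons_val_zero, Matrix.cons_val_one, Matrix.head_cons,
      Matrix.cons_val_two, Matrix.tail_cons]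
    nlinarith [Real.sin_sq_add_cos_sq t, sq_nonneg (R 0 * Real.sin t - R 1 * Real.cos t)]
  calc enorm' (CRfun R t) = Real.sqrt (∑ i, (CRfun R t) i ^ 2) := rfl
    _ ≤ Real.sqrt (r^2) := Real.sqrt_le_sqrt hsum
    _ = r := by rw [Real.sqrt_sq hr0.le]

lemma CU_norm : enorm' ![(0:ℝ),0,1] = 1 := by
  unfold enorm'
  rw [Fin.sum_univ_three]
  norm_num
  exact Or.inl rfl

lemma pointwise_bound (ρ : ℝ) (R : Fin 3 → ℝ) (r : ℝ) (hρ : 0 < ρ) (hr : enorm' R = r)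
    (h2ρ : 2*ρ ≤ r) (t : ℝ) :
    enorm' ((2:ℝ)⁻¹ • (Gfun ρ R t + Gfun ρ R (t + Real.pi)) - Msymfun ρ R r t)
      ≤ 17500 * ρ^4 / r^5 := by
  have hr0 : 0 < r := by linarith
  obtain ⟨hPb, hQb⟩ := PQ_bounds ρ R r hρ hr h2ρ t
  rw [hpt]
  refine le_trans (enorm'_add_le _ _) ?_
  rw [enorm'_smul, enorm'_smul, CU_norm, mul_one]
  have h1 : |Pfun ρ R r t| * enorm' (CRfun R t) ≤ (15000 * ρ^4 / r^6) * r :=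
    mul_le_mul hPb (CR_norm R r hr hr0 t) (enorm'_nonneg _) (by positivity)
  have h2 : (15000 * ρ^4 / r^6) * r = 15000 * ρ^4 / r^5 := by
    field_simp
  rw [h2] at h1
  have h3 : (15000:ℝ)*ρ^4/r^5 + 2500*ρ^4/r^5 = 17500*ρ^4/r^5 := by ring
  linarith

/-! ### Continuity and symmetrization -/

lemma Gfun_continuous (ρ : ℝ) (R : Fin 3 → ℝ) (r : ℝ) (hρ : 0 < ρ) (hr : enorm' R = r)
    (h2ρ : 2*ρ ≤ r) : Continuous (Gfun ρ R) := by
  have hcv : Continuous fun t => R - ρ • cvec t := by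
    apply continuous_pi
    intro i
    fin_cases i <;> simp [cvec] <;> fun_prop
  have hA : Continuous fun t => enorm' (R - ρ • cvec t) := continuous_enorm'.comp hcv
  have hinv : Continuous fun t => (enorm' (R - ρ • cvec t) ^ 3)⁻¹ := by
    apply Continuous.inv₀ (hA.pow 3)
    intro t
    have := A_pos ρ R r hρ hr h2ρ t
    exact pow_ne_zero 3 this.ne'
  have hcross : Continuous fun t =>
      crossProduct (ρ • ![-Real.sin t, Real.cos t, 0]) (R - ρ • cvec t) := by
    apply continuous_pi
    intro i
    fin_cases i <;> simp [cross_apply, cvec] <;> fun_prop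
  exact hinv.smul hcross

lemma Gfun_periodic (ρ : ℝ) (R : Fin 3 → ℝ) : Function.Periodic (Gfun ρ R) (2*Real.pi) := by
  intro t
  unfold Gfun cvec
  simp [Real.cos_add_two_pi, Real.sin_add_two_pi]

lemma symmetrize (ρ : ℝ) (R : Fin 3 → ℝ) (r : ℝ) (hρ : 0 < ρ) (hr : enorm' R = r)
    (h2ρ : 2*ρ ≤ r) :
    ∫ t in (0:ℝ)..(2*Real.pi), Gfun ρ R t
      = ∫ t in (0:ℝ)..(2*Real.pi), (2:ℝ)⁻¹ • (Gfun ρ R t + Gfun ρ R (t + Real.pi)) := by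
  have hGc := Gfun_continuous ρ R r hρ hr h2ρ
  have hGint : IntervalIntegrable (Gfun ρ R) MeasureTheory.volume 0 (2*Real.pi) :=
    hGc.intervalIntegrable _ _
  have hGintπ : IntervalIntegrable (fun t => Gfun ρ R (t + Real.pi))
      MeasureTheory.volume 0 (2*Real.pi) :=
    (hGc.comp (by fun_prop)).intervalIntegrable _ _
  have h1 : ∫ t in (0:ℝ)..(2*Real.pi), Gfun ρ R (t + Real.pi)
      = ∫ t in (0:ℝ)..(2*Real.pi), Gfun ρ R t := by
    rw [intervalIntegral.integral_comp_add_right (Gfun ρ R) Real.pi]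
    have h2 := (Gfun_periodic ρ R).intervalIntegral_add_eq Real.pi 0
    rw [show (0:ℝ) + Real.pi = Real.pi by ring, show 2*Real.pi + Real.pi = Real.pi + 2*Real.pi by ring]
    simpa using h2
  rw [intervalIntegral.integral_smul, intervalIntegral.integral_add hGint hGintπ, h1]
  rw [show (∫ t in (0:ℝ)..(2*Real.pi), Gfun ρ R t) + (∫ t in (0:ℝ)..(2*Real.pi), Gfun ρ R t)
      = (2:ℝ) • ∫ t in (0:ℝ)..(2*Real.pi), Gfun ρ R t from (two_smul ℝ _).symm]
  rw [smul_smul]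
  norm_num

/-- Dipole approximation of the Biot–Savart field of a circular current loop of
radius `ρ` centered at `a` with normal `e₃`, carrying current `J`: away from the
loop (at distance at least `2ρ` from `a`), the field differs from the dipole field
`(μ₀/4π) D(x − a) α`, with dipole moment `α = π ρ² J e₃`, by at most
`C μ₀ |J| ρ⁴ / |x − a|⁵`, where `C` is independent of `ρ`, `a`, `J`, `μ₀` and `x`. -/
theorem biot_savart_dipole_approx :
    ∃ C > (0 : ℝ), ∀ (μ₀ J ρ : ℝ) (a x : Fin 3 → ℝ), 0 < μ₀ → 0 < ρ →
      2 * ρ ≤ enorm' (x - a) →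
      let γ : ℝ → Fin 3 → ℝ := fun t => a + ρ • ![Real.cos t, Real.sin t, 0]
      let γ' : ℝ → Fin 3 → ℝ := fun t => ρ • ![-Real.sin t, Real.cos t, 0]
      let B : Fin 3 → ℝ := (μ₀ * J / (4 * Real.pi)) •
        ∫ t in (0 : ℝ)..(2 * Real.pi),
          (enorm' (x - γ t) ^ 3)⁻¹ • crossProduct (γ' t) (x - γ t)
      let α : Fin 3 → ℝ := (Real.pi * ρ ^ 2 * J) • ![0, 0, 1]
      enorm' (B - (μ₀ / (4 * Real.pi)) • (Dmat (x - a) *ᵥ α)) ≤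
        C * μ₀ * |J| * ρ ^ 4 / enorm' (x - a) ^ 5 := by
  refine ⟨10000, by norm_num, ?_⟩
  intro μ₀ J ρ a x hμ hρ h2ρ
  intro γ γ' B α
  set R := x - a with hRdef
  set r := enorm' R with hrdef
  have hr : enorm' R = r := rfl
  have hr0 : 0 < r := by linarith
  -- rewrite the integrand
  have hInt : ∀ t, (enorm' (x - γ t) ^ 3)⁻¹ • crossProduct (γ' t) (x - γ t) = Gfun ρ R t := by
    intro t
    have hxγ : x - γ t = R - ρ • cvec t := by
      unfold γ R
      funext i
      fin_cases i <;>
        simp only [cvec, Pi.sub_apply, Pi.add_apply, Pi.smul_apply, smul_eq_mul, fin3_mk2,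
          Fin.zero_eta, Fin.mk_one, Matrix.cons_val_zero, Matrix.cons_val_one,
          Matrix.head_cons, Matrix.cons_val_two, Matrix.tail_cons] <;> ring
    have hγ' : γ' t = ρ • ![-Real.sin t, Real.cos t, 0] := rfl
    rw [Gfun, hxγ, hγ']
  have hB : B = (μ₀ * J / (4 * Real.pi)) • ∫ t in (0:ℝ)..(2*Real.pi), Gfun ρ R t := by
    unfold B
    congr 1
    exact intervalIntegral.integral_congr (fun t _ => hInt t)
  have hDα : Dmat R *ᵥ α = (Real.pi * ρ^2 * J) • (Dmat R *ᵥ ![(0:ℝ),0,1]) := by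
    unfold α
    exact Matrix.mulVec_smul _ _ _
  have key : B - (μ₀ / (4*Real.pi)) • (Dmat R *ᵥ α)
      = (μ₀ * J / (4*Real.pi)) • ((∫ t in (0:ℝ)..(2*Real.pi), Gfun ρ R t)
          - (Real.pi*ρ^2) • (Dmat R *ᵥ ![(0:ℝ),0,1])) := by
    rw [hB, hDα, smul_sub, smul_smul, smul_smul,
      show (μ₀/(4*Real.pi))*(Real.pi*ρ^2*J) = (μ₀*J/(4*Real.pi))*(Real.pi*ρ^2) by ring]
  rw [key, symmetrize ρ R r hρ hr h2ρ, ← Msym_integral ρ R r hr hr0]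
  have hGc := Gfun_continuous ρ R r hρ hr h2ρ
  have hGsymInt : IntervalIntegrable
      (fun t => (2:ℝ)⁻¹ • (Gfun ρ R t + Gfun ρ R (t + Real.pi)))
      MeasureTheory.volume 0 (2*Real.pi) := by
    apply Continuous.intervalIntegrable
    exact (continuous_const (y := (2:ℝ)⁻¹)).smul (hGc.add (hGc.comp (continuous_add_right Real.pi)))
  have hMsymInt : IntervalIntegrable (Msymfun ρ R r) MeasureTheory.volume 0 (2*Real.pi) := by
    apply Continuous.intervalIntegrable
    unfold Msymfun
    fun_prop
  rw [← intervalIntegral.integral_sub hGsymInt hMsymInt, enorm'_smul]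
  -- bound the norm of the integral
  set F := fun t => (2:ℝ)⁻¹ • (Gfun ρ R t + Gfun ρ R (t + Real.pi)) - Msymfun ρ R r t with hF
  have hFint : IntervalIntegrable F MeasureTheory.volume 0 (2*Real.pi) := hGsymInt.sub hMsymInt
  have hnorm : enorm' (∫ t in (0:ℝ)..(2*Real.pi), F t) ≤ (17500*ρ^4/r^5) * |2*Real.pi - 0| := by
    rw [enorm'_eq_norm, ← ContinuousLinearEquiv.coe_coe,
      ← ContinuousLinearMap.intervalIntegral_comp_comm _ hFint]
    apply intervalIntegral.norm_integral_le_of_norm_le_const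
    intro t ht
    rw [ContinuousLinearEquiv.coe_coe, ← enorm'_eq_norm]
    exact pointwise_bound ρ R r hρ hr h2ρ t
  have habs : |2*Real.pi - 0| = 2*Real.pi := by
    rw [sub_zero, abs_of_pos (by positivity)]
  rw [habs] at hnorm
  have hcoef : |μ₀ * J / (4*Real.pi)| = μ₀ * |J| / (4*Real.pi) := by
    rw [abs_div, abs_mul, abs_of_pos hμ, abs_of_pos (show (0:ℝ) < 4*Real.pi by positivity)]
  calc |μ₀ * J / (4*Real.pi)| * enorm' (∫ t in (0:ℝ)..(2*Real.pi), F t)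
      ≤ |μ₀ * J / (4*Real.pi)| * ((17500*ρ^4/r^5) * (2*Real.pi)) := by
        exact mul_le_mul_of_nonneg_left hnorm (abs_nonneg _)
    _ = 8750 * (μ₀ * |J| * ρ^4 / r^5) := by
        rw [hcoef]
        field_simp
        ring
    _ ≤ 10000 * μ₀ * |J| * ρ^4 / r^5 := by
        have hK : 0 ≤ μ₀ * |J| * ρ^4 / r^5 := by positivity
        have : (10000:ℝ) * μ₀ * |J| * ρ^4 / r^5 = 10000 * (μ₀ * |J| * ρ^4 / r^5) := by ring
        rw [this]
        linarith
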